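/- Let s ∈ (0,1), let n be an integer with n > 2s, and let 2*_s = 2n/(n-2s). Let v_k : ℝⁿ → [0,∞) be a sequence of nonnegative measurable functions with ∫_{ℝⁿ} v_k^{2*_s} dx < ∞, converging almost everywhere to a function v ∈ L^{2*_s}(ℝⁿ). Assume (i) for every continuous compactly supported φ : ℝⁿ → ℝ, ∫_{ℝⁿ} v_k^{2*_s} φ dx → ∫_{ℝⁿ} v^{2*_s} φ dx as k → ∞, and (ii) for every η > 0 there exists ρ > 0 such that ∫_{ℝⁿ ∖ B_ρ} v_k^{2*_s} dx < η for all k, where B_ρ is the ball of radius ρ centered at the origin. Then ∫_{ℝⁿ} |v_k - v|^{2*_s} dx → 0 as k → ∞. -/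

import Mathlib

open MeasureTheory Filter

open scoped Topology

lemma aux_abs_rpow_sub_le {a b p : ℝ} (ha : 0 ≤ a) (hb : 0 ≤ b) (hp : 0 ≤ p) :
    |a - b| ^ p ≤ a ^ p + b ^ p := by
  rcases le_total a b with h | h
  · have h1 : |a - b| ≤ b := by rw [abs_of_nonpos (by linarith)]; linarith
    calc |a - b| ^ p ≤ b ^ p := Real.rpow_le_rpow (abs_nonneg _) h1 hp
    _ ≤ a ^ p + b ^ p := le_add_of_nonneg_left (Real.rpow_nonneg ha p)
  · have h1 : |a - b| ≤ a := by rw [abs_of_nonneg (by linarith)]; linarith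
    calc |a - b| ^ p ≤ a ^ p := Real.rpow_le_rpow (abs_nonneg _) h1 hp
    _ ≤ a ^ p + b ^ p := le_add_of_nonneg_right (Real.rpow_nonneg hb p)

/-- Fatou's lemma for real integrals, "eventually" form. -/
lemma aux_fatou_eventually {α : Type*} [MeasurableSpace α] {μ : Measure α}
    {f : ℕ → α → ℝ} {g : α → ℝ}
    (h0 : ∀ n, 0 ≤ᵐ[μ] f n) (hint : ∀ n, Integrable (f n) μ) (hg : Integrable g μ)
    (hae : ∀ᵐ x ∂μ, Tendsto (fun n => f n x) atTop (𝓝 (g x)))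
    {c : ℝ} (hc : c < ∫ x, g x ∂μ) :
    ∀ᶠ n in atTop, c < ∫ x, f n x ∂μ := by
  rcases lt_or_ge c 0 with hc0 | hc0
  · exact Eventually.of_forall fun n => lt_of_lt_of_le hc0 (integral_nonneg_of_ae (h0 n))
  have hg0 : 0 ≤ᵐ[μ] g := by
    filter_upwards [hae, ae_all_iff.2 h0] with x hx h0x
    exact ge_of_tendsto' hx fun k => h0x k
  set Φ : ℕ → ENNReal := fun n => ∫⁻ x, ENNReal.ofReal (f n x) ∂μ with hΦdef
  set Ψ : ENNReal := ∫⁻ x, ENNReal.ofReal (g x) ∂μ with hΨdef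
  have hΨfin : Ψ ≠ ⊤ := ((hasFiniteIntegral_iff_ofReal hg0).1 hg.hasFiniteIntegral).ne
  have hΦfin : ∀ n, Φ n ≠ ⊤ := fun n =>
    ((hasFiniteIntegral_iff_ofReal (h0 n)).1 (hint n).hasFiniteIntegral).ne
  have hgint : ∫ x, g x ∂μ = Ψ.toReal := integral_eq_lintegral_of_nonneg_ae hg0 hg.1
  have hfint : ∀ n, ∫ x, f n x ∂μ = (Φ n).toReal := fun n =>
    integral_eq_lintegral_of_nonneg_ae (h0 n) (hint n).1
  have hfatou : Ψ ≤ liminf Φ atTop := by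
    have h1 : ∀ᵐ x ∂μ, Tendsto (fun n => ENNReal.ofReal (f n x)) atTop
        (𝓝 (ENNReal.ofReal (g x))) :=
      hae.mono fun x hx => (ENNReal.continuous_ofReal.tendsto _).comp hx
    have h2 : Ψ = ∫⁻ x, liminf (fun n => ENNReal.ofReal (f n x)) atTop ∂μ :=
      lintegral_congr_ae (h1.mono fun x hx => hx.liminf_eq.symm)
    rw [h2]
    exact lintegral_liminf_le' fun n =>
      ENNReal.measurable_ofReal.comp_aemeasurable (hint n).1.aemeasurable
  have hcΨ : ENNReal.ofReal c < Ψ :=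
    (ENNReal.ofReal_lt_iff_lt_toReal hc0 hΨfin).2 (by rw [← hgint]; exact hc)
  filter_upwards [Filter.eventually_lt_of_lt_liminf (lt_of_lt_of_le hcΨ hfatou)] with n hn
  rw [hfint n]
  exact (ENNReal.ofReal_lt_iff_lt_toReal hc0 (hΦfin n)).1 hn

/-- Brezis–Lieb type convergence: if `v_k ≥ 0`, `∫ v_k^{2*_s} < ∞`, `v_k → v` a.e. with
`v ∈ L^{2*_s}`, the measures `v_k^{2*_s} dx` converge to `v^{2*_s} dx` against every
continuous compactly supported test function, and the family `v_k^{2*_s}` is tight,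
then `v_k → v` in `L^{2*_s}(ℝⁿ)`, i.e. `∫ |v_k - v|^{2*_s} → 0`. -/
theorem stmt_10 (s : ℝ) (hs : s ∈ Set.Ioo (0 : ℝ) 1) (n : ℕ) (hn : 2 * s < (n : ℝ))
    (v : ℕ → EuclideanSpace ℝ (Fin n) → ℝ) (w : EuclideanSpace ℝ (Fin n) → ℝ)
    (hv0 : ∀ k x, 0 ≤ v k x)
    (hvmeas : ∀ k, Measurable (v k)) (hwmeas : Measurable w)
    (hvint : ∀ k, Integrable
      (fun x => v k x ^ (2 * (n : ℝ) / ((n : ℝ) - 2 * s))) volume)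
    (hwint : Integrable
      (fun x => |w x| ^ (2 * (n : ℝ) / ((n : ℝ) - 2 * s))) volume)
    (hae : ∀ᵐ x : EuclideanSpace ℝ (Fin n) ∂volume,
      Tendsto (fun k => v k x) atTop (nhds (w x)))
    (hweak : ∀ φ : EuclideanSpace ℝ (Fin n) → ℝ, Continuous φ → HasCompactSupport φ →
      Tendsto (fun k => ∫ x, v k x ^ (2 * (n : ℝ) / ((n : ℝ) - 2 * s)) * φ x) atTop
        (nhds (∫ x, w x ^ (2 * (n : ℝ) / ((n : ℝ) - 2 * s)) * φ x)))
    (htight : ∀ η : ℝ, 0 < η → ∃ ρ : ℝ, 0 < ρ ∧ ∀ k,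
      (∫ x in (Metric.ball (0 : EuclideanSpace ℝ (Fin n)) ρ)ᶜ,
        v k x ^ (2 * (n : ℝ) / ((n : ℝ) - 2 * s))) < η) :
    Tendsto (fun k => ∫ x, |v k x - w x| ^ (2 * (n : ℝ) / ((n : ℝ) - 2 * s)))
      atTop (nhds 0) := by
  obtain ⟨hs0, -⟩ := hs
  set p : ℝ := 2 * (n : ℝ) / ((n : ℝ) - 2 * s) with hpdef
  have hns : 0 < (n : ℝ) - 2 * s := by linarith
  have hn0 : 0 < (n : ℝ) := by linarith
  have hp0 : 0 < p := div_pos (by linarith) hns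
  have hp0' : (0 : ℝ) ≤ p := hp0.le
  -- nonnegativity of w a.e.
  have hw0 : ∀ᵐ x : EuclideanSpace ℝ (Fin n) ∂volume, 0 ≤ w x := by
    filter_upwards [hae] with x hx
    exact ge_of_tendsto' hx fun k => hv0 k x
  have hWcongr : (fun x => |w x| ^ p) =ᵐ[(volume : Measure (EuclideanSpace ℝ (Fin n)))]
      fun x => w x ^ p := hw0.mono fun x hx => by simp only [abs_of_nonneg hx]
  have hWint : Integrable (fun x => w x ^ p) volume := hwint.congr hWcongr
  have hB : ∫ x, |w x| ^ p = ∫ x, w x ^ p := integral_congr_ae hWcongr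
  -- a.e. convergence of the powers
  have haeP : ∀ᵐ x : EuclideanSpace ℝ (Fin n) ∂volume,
      Tendsto (fun k => v k x ^ p) atTop (𝓝 (w x ^ p)) := by
    filter_upwards [hae] with x hx
    exact ((Real.continuousAt_rpow_const (w x) p (Or.inr hp0')).tendsto).comp hx
  -- Step A: convergence of total masses
  have hA : Tendsto (fun k => ∫ x, v k x ^ p) atTop (𝓝 (∫ x, w x ^ p)) := by
    rw [Metric.tendsto_atTop]
    intro ε hε
    obtain ⟨ρ, hρ, htail⟩ := htight (ε / 4) (by linarith)
    obtain ⟨φ, hφ1, -, hφc, hφ01⟩ :=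
      exists_continuous_one_zero_of_isCompact
        (isCompact_closedBall (0 : EuclideanSpace ℝ (Fin n)) ρ) isClosed_empty
        (by simp)
    have hφcont : Continuous φ := φ.continuous
    have hφ0 : ∀ x, 0 ≤ φ x := fun x => (hφ01 x).1
    have hφle : ∀ x, φ x ≤ 1 := fun x => (hφ01 x).2
    have hbd1 : ∃ C : ℝ, ∀ x, ‖φ x‖ ≤ C :=
      ⟨1, fun x => by rw [Real.norm_eq_abs, abs_of_nonneg (hφ0 x)]; exact hφle x⟩
    have hbd2 : ∃ C : ℝ, ∀ x : EuclideanSpace ℝ (Fin n), ‖1 - φ x‖ ≤ C :=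
      ⟨1, fun x => by rw [Real.norm_eq_abs, abs_of_nonneg (by linarith [hφle x])]
                      linarith [hφ0 x]⟩
    have hIφ : ∀ k, Integrable (fun x => v k x ^ p * φ x) volume := fun k => by
      have := (hvint k).bdd_mul hφcont.aestronglyMeasurable (ae_of_all _ hbd1.choose_spec)
      simpa [mul_comm] using this
    have hIψ : ∀ k, Integrable (fun x => v k x ^ p * (1 - φ x)) volume := fun k => by
      have := (hvint k).bdd_mul (continuous_const.sub hφcont).aestronglyMeasurable (ae_of_all _ hbd2.choose_spec)
      simpa [mul_comm] using this
    have hWφ : Integrable (fun x => w x ^ p * φ x) volume := by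
      have := hWint.bdd_mul hφcont.aestronglyMeasurable (ae_of_all _ hbd1.choose_spec)
      simpa [mul_comm] using this
    have hWψ : Integrable (fun x => w x ^ p * (1 - φ x)) volume := by
      have := hWint.bdd_mul (continuous_const.sub hφcont).aestronglyMeasurable (ae_of_all _ hbd2.choose_spec)
      simpa [mul_comm] using this
    -- tail control for v k
    have key1 : ∀ k, ∫ x, v k x ^ p * (1 - φ x) ≤
        ∫ x in (Metric.ball (0 : EuclideanSpace ℝ (Fin n)) ρ)ᶜ, v k x ^ p := by
      intro k
      rw [← integral_indicator Metric.isOpen_ball.measurableSet.compl]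
      refine integral_mono (hIψ k)
        ((hvint k).indicator Metric.isOpen_ball.measurableSet.compl) fun x => ?_
      by_cases hx : x ∈ Metric.ball (0 : EuclideanSpace ℝ (Fin n)) ρ
      · have hφx : φ x = 1 := hφ1 (Metric.ball_subset_closedBall hx)
        have : x ∉ (Metric.ball (0 : EuclideanSpace ℝ (Fin n)) ρ)ᶜ := by simpa using hx
        rw [Set.indicator_of_notMem this, hφx]
        simp
      · rw [Set.indicator_of_mem (by simpa using hx)]
        have h2 : 0 ≤ v k x ^ p := Real.rpow_nonneg (hv0 k x) p
        nlinarith [hφ0 x]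
    -- tail control for w
    have keyW : (∫ x in (Metric.ball (0 : EuclideanSpace ℝ (Fin n)) ρ)ᶜ, w x ^ p) ≤ ε / 4 := by
      by_contra hcon
      push_neg at hcon
      have hev := aux_fatou_eventually
        (μ := volume.restrict (Metric.ball (0 : EuclideanSpace ℝ (Fin n)) ρ)ᶜ)
        (f := fun k x => v k x ^ p) (g := fun x => w x ^ p)
        (fun k => Eventually.of_forall fun x => Real.rpow_nonneg (hv0 k x) p)
        (fun k => (hvint k).restrict) hWint.restrict (ae_restrict_of_ae haeP) hcon
      obtain ⟨k, hk⟩ := hev.exists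
      exact absurd (htail k) (by linarith)
    have keyW2 : ∫ x, w x ^ p * (1 - φ x) ≤
        ∫ x in (Metric.ball (0 : EuclideanSpace ℝ (Fin n)) ρ)ᶜ, w x ^ p := by
      rw [← integral_indicator Metric.isOpen_ball.measurableSet.compl]
      refine integral_mono_ae hWψ
        (hWint.indicator Metric.isOpen_ball.measurableSet.compl) ?_
      filter_upwards [hw0] with x hwx
      by_cases hx : x ∈ Metric.ball (0 : EuclideanSpace ℝ (Fin n)) ρ
      · have hφx : φ x = 1 := hφ1 (Metric.ball_subset_closedBall hx)
        have : x ∉ (Metric.ball (0 : EuclideanSpace ℝ (Fin n)) ρ)ᶜ := by simpa using hx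
        rw [Set.indicator_of_notMem this, hφx]
        simp
      · rw [Set.indicator_of_mem (by simpa using hx)]
        have h2 : 0 ≤ w x ^ p := Real.rpow_nonneg hwx p
        nlinarith [hφ0 x]
    have hWψ0 : 0 ≤ ∫ x, w x ^ p * (1 - φ x) := by
      refine integral_nonneg_of_ae ?_
      filter_upwards [hw0] with x hwx
      exact mul_nonneg (Real.rpow_nonneg hwx p) (by linarith [hφle x])
    -- weak convergence against φ
    have hw2 := hweak φ hφcont hφc
    rw [Metric.tendsto_atTop] at hw2
    obtain ⟨N, hN⟩ := hw2 (ε / 4) (by linarith)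
    refine ⟨N, fun k hk => ?_⟩
    have hsplitv : ∫ x, v k x ^ p = (∫ x, v k x ^ p * φ x) + ∫ x, v k x ^ p * (1 - φ x) := by
      rw [← integral_add (hIφ k) (hIψ k)]
      congr 1; funext x; ring
    have hsplitw : ∫ x, w x ^ p = (∫ x, w x ^ p * φ x) + ∫ x, w x ^ p * (1 - φ x) := by
      rw [← integral_add hWφ hWψ]
      congr 1; funext x; ring
    have h2 := hN k hk
    rw [Real.dist_eq] at h2
    obtain ⟨h2a, h2b⟩ := abs_lt.1 h2
    have e1 : 0 ≤ ∫ x, v k x ^ p * (1 - φ x) :=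
      integral_nonneg fun x => mul_nonneg (Real.rpow_nonneg (hv0 k x) p)
        (by linarith [hφle x])
    have e2 : ∫ x, v k x ^ p * (1 - φ x) < ε / 4 := lt_of_le_of_lt (key1 k) (htail k)
    have e4 : ∫ x, w x ^ p * (1 - φ x) ≤ ε / 4 := le_trans keyW2 keyW
    rw [Real.dist_eq, hsplitv, hsplitw]
    rw [abs_lt]
    constructor <;> linarith
  -- Step B: generalized dominated convergence
  have hhmeas : ∀ k, Measurable fun x => |v k x - w x| ^ p := fun k =>
    (Real.continuous_rpow_const hp0').measurable.comp ((hvmeas k).sub hwmeas).abs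
  have hh0 : ∀ k x, (0 : ℝ) ≤ |v k x - w x| ^ p := fun k x =>
    Real.rpow_nonneg (abs_nonneg _) p
  have hhle : ∀ k, ∀ᵐ x : EuclideanSpace ℝ (Fin n) ∂volume,
      |v k x - w x| ^ p ≤ v k x ^ p + |w x| ^ p := fun k => by
    filter_upwards [hw0] with x hx
    calc |v k x - w x| ^ p ≤ v k x ^ p + w x ^ p :=
          aux_abs_rpow_sub_le (hv0 k x) hx hp0'
    _ = v k x ^ p + |w x| ^ p := by rw [abs_of_nonneg hx]
  have hhint : ∀ k, Integrable (fun x => |v k x - w x| ^ p) volume := fun k =>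
    Integrable.mono' ((hvint k).add hwint) (hhmeas k).aestronglyMeasurable
      ((hhle k).mono fun x hx => by
        rw [Real.norm_eq_abs, abs_of_nonneg (hh0 k x)]; exact hx)
  have hhlim : ∀ᵐ x : EuclideanSpace ℝ (Fin n) ∂volume,
      Tendsto (fun k => |v k x - w x| ^ p) atTop (𝓝 0) := by
    filter_upwards [hae] with x hx
    have h1 : Tendsto (fun k => |v k x - w x|) atTop (𝓝 0) := by
      have h2 := (hx.sub (tendsto_const_nhds (x := w x))).abs
      rw [sub_self, abs_zero] at h2
      exact h2
    have h2 := ((Real.continuousAt_rpow_const 0 p (Or.inr hp0')).tendsto).comp h1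
    rwa [Real.zero_rpow hp0.ne'] at h2
  have hgint : ∀ k, Integrable
      (fun x => v k x ^ p + |w x| ^ p - |v k x - w x| ^ p) volume := fun k =>
    ((hvint k).add hwint).sub (hhint k)
  have hg0 : ∀ k, (0 : EuclideanSpace ℝ (Fin n) → ℝ) ≤ᵐ[volume]
      fun x => v k x ^ p + |w x| ^ p - |v k x - w x| ^ p := fun k =>
    (hhle k).mono fun x hx => by simp only [Pi.zero_apply]; linarith
  have hglim : ∀ᵐ x : EuclideanSpace ℝ (Fin n) ∂volume,
      Tendsto (fun k => v k x ^ p + |w x| ^ p - |v k x - w x| ^ p) atTop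
        (𝓝 (2 * |w x| ^ p)) := by
    filter_upwards [haeP, hhlim, hw0] with x h1 h2 hx
    have h3 := (h1.add (tendsto_const_nhds (x := |w x| ^ p))).sub h2
    rw [sub_zero] at h3
    have : w x ^ p + |w x| ^ p = 2 * |w x| ^ p := by rw [abs_of_nonneg hx]; ring
    rwa [this] at h3
  have h2wint : Integrable (fun x => 2 * |w x| ^ p) volume := hwint.const_mul 2
  have h2wI : ∫ x, 2 * |w x| ^ p = 2 * ∫ x, w x ^ p := by
    rw [integral_const_mul, hB]
  have hgoal : ∀ ε : ℝ, 0 < ε → ∀ᶠ k in atTop, ∫ x, |v k x - w x| ^ p < ε := by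
    intro ε hε
    have hfat := aux_fatou_eventually (μ := (volume : Measure (EuclideanSpace ℝ (Fin n))))
      hg0 hgint h2wint hglim (c := 2 * (∫ x, w x ^ p) - ε / 2)
      (by rw [h2wI]; linarith)
    have hAev : ∀ᶠ k in atTop, ∫ x, v k x ^ p < (∫ x, w x ^ p) + ε / 2 := by
      have : ∀ᶠ y in 𝓝 (∫ x, w x ^ p), y < (∫ x, w x ^ p) + ε / 2 :=
        eventually_lt_nhds (by linarith)
      exact hA.eventually this
    filter_upwards [hfat, hAev] with k h1 h2
    have h3 : ∫ x, (v k x ^ p + |w x| ^ p - |v k x - w x| ^ p) =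
        (∫ x, v k x ^ p) + (∫ x, |w x| ^ p) - ∫ x, |v k x - w x| ^ p := by
      rw [integral_sub (f := fun x => v k x ^ p + |w x| ^ p) ((hvint k).add hwint) (hhint k),
        integral_add (hvint k) hwint]
    rw [h3, hB] at h1
    linarith
  rw [NormedAddCommGroup.tendsto_nhds_zero]
  intro ε hε
  filter_upwards [hgoal ε hε] with k hk
  rw [Real.norm_eq_abs, abs_of_nonneg (integral_nonneg (hh0 k))]
  exact hk
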